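/- Let n ≥ 2. There is no proper holomorphic map f : ℂⁿ ∖ closure(𝔹ₙ) → 𝔹_N ∖ closure(B_R(C)), where B_R(C) is a ball in ℂᴺ with B_R(C) ∩ 𝔹_N ≠ ∅. -/
import Mathlib


open MvPolynomial Metric

def ProperOn {α β : Type*} [TopologicalSpace α] [TopologicalSpace β]
    (f : α → β) (S : Set α) (T : Set β) : Prop :=
  Set.MapsTo f S T ∧ ∀ K : Set β, K ⊆ T → IsCompact K → IsCompact (S ∩ f ⁻¹' K)

lemma coord_norm_le {ι : Type*} [Fintype ι] [DecidableEq ι]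
    (x : EuclideanSpace ℂ ι) (i : ι) : ‖x i‖ ≤ ‖x‖ := by
  have h := norm_inner_le_norm (𝕜 := ℂ) (EuclideanSpace.single i (1 : ℂ)) x
  rw [EuclideanSpace.inner_single_left, EuclideanSpace.norm_single] at h
  simpa using h

/-- for `n ≥ 2` there is no proper holomorphic map from the
complement of the closed unit ball in `ℂⁿ` to a ball difference
`𝔹_N ∖ closure(B_R(C))` with `B_R(C) ∩ 𝔹_N ≠ ∅`. -/
theorem no_proper_complement_to_difference {n N : ℕ} (hn : 2 ≤ n)
    (Cc : EuclideanSpace ℂ (Fin N)) (R : ℝ) (hR : 0 < R)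
    (hint : (ball Cc R ∩ ball (0 : EuclideanSpace ℂ (Fin N)) 1).Nonempty) :
    ¬ ∃ f : EuclideanSpace ℂ (Fin n) → EuclideanSpace ℂ (Fin N),
      DifferentiableOn ℂ f {z : EuclideanSpace ℂ (Fin n) | 1 < ‖z‖} ∧
      ProperOn f {z : EuclideanSpace ℂ (Fin n) | 1 < ‖z‖}
        (ball (0 : EuclideanSpace ℂ (Fin N)) 1 \ closedBall Cc R) := by
  rintro ⟨f, hf, hmaps, hproper⟩
  set S : Set (EuclideanSpace ℂ (Fin n)) := {z | 1 < ‖z‖} with hS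
  have hSopen : IsOpen S := isOpen_lt continuous_const continuous_norm
  set i0 : Fin n := ⟨0, by omega⟩
  set i1 : Fin n := ⟨1, by omega⟩
  have hi01 : i0 ≠ i1 := by simp [i0, i1, Fin.ext_iff]
  set w : EuclideanSpace ℂ (Fin n) := EuclideanSpace.single i0 (1 : ℂ) with hw
  set v : EuclideanSpace ℂ (Fin n) := EuclideanSpace.single i1 (2 : ℂ) with hv
  set γ : ℂ → EuclideanSpace ℂ (Fin n) := fun t => t • w + v with hγ
  -- coordinates of γ t
  have hγ1 : ∀ t : ℂ, (γ t) i1 = 2 := by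
    intro t
    simp only [hγ, hw, hv, PiLp.add_apply, PiLp.smul_apply, EuclideanSpace.single_apply]
    rw [if_neg (fun h => hi01 h.symm)]
    simp
  have hγ0 : ∀ t : ℂ, (γ t) i0 = t := by
    intro t
    simp only [hγ, hw, hv, PiLp.add_apply, PiLp.smul_apply, EuclideanSpace.single_apply]
    rw [if_neg hi01]
    simp
  -- γ lands in S
  have hγS : ∀ t : ℂ, γ t ∈ S := by
    intro t
    have h2 : (2 : ℝ) ≤ ‖γ t‖ := by
      have := coord_norm_le (γ t) i1
      rw [hγ1 t] at this
      simpa using this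
    simp only [hS, Set.mem_setOf_eq]
    linarith
  -- γ is differentiable
  have hγdiff : Differentiable ℂ γ := fun t =>
    ((differentiable_id.smul_const w).add_const v).differentiableAt
  -- f ∘ γ is entire and bounded
  have hfγ : Differentiable ℂ (f ∘ γ) := by
    intro t
    exact (hf.differentiableAt (hSopen.mem_nhds (hγS t))).comp t (hγdiff t)
  have hbdd : Bornology.IsBounded (Set.range (f ∘ γ)) := by
    apply Bornology.IsBounded.subset (isBounded_ball (x := (0 : EuclideanSpace ℂ (Fin N))) (r := 1))
    rintro _ ⟨t, rfl⟩
    exact (hmaps (hγS t)).1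
  -- Liouville: f ∘ γ is constant
  have hconst : ∀ t : ℂ, f (γ t) = f (γ 0) := fun t =>
    hfγ.apply_eq_apply_of_bounded hbdd t 0
  -- the singleton {f (γ 0)} is a compact subset of the target
  have hmem : f (γ 0) ∈ ball (0 : EuclideanSpace ℂ (Fin N)) 1 \ closedBall Cc R :=
    hmaps (hγS 0)
  have hcpt := hproper {f (γ 0)} (Set.singleton_subset_iff.mpr hmem) isCompact_singleton
  have hbd := hcpt.isBounded
  rw [isBounded_iff_forall_norm_le] at hbd
  obtain ⟨C, hC⟩ := hbd
  have hmemC : γ (C + 1) ∈ S ∩ f ⁻¹' {f (γ 0)} :=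
    ⟨hγS _, by simp [hconst]⟩
  have := hC _ hmemC
  have hge : (C + 1 : ℝ) ≤ ‖γ ((C : ℂ) + 1)‖ := by
    have h := coord_norm_le (γ ((C : ℂ) + 1)) i0
    rw [hγ0] at h
    calc (C + 1 : ℝ) ≤ ‖(C : ℂ) + 1‖ := by
          have : (C + 1 : ℝ) ≤ |C + 1| := le_abs_self _
          simpa [← Complex.ofReal_one, ← Complex.ofReal_add, Complex.norm_real] using this
      _ ≤ ‖γ ((C : ℂ) + 1)‖ := h
  linarith
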